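/- Contravariance of duality with respect to composition of concrete bicharacters: with V^{C→A} ∈ U(H_C⊗H_A), V^{A→B} ∈ U(H_A⊗H_B) concrete bicharacters and V^{C→B} their composition determined by V^{C→B}₁₃ = (V^{C→A}₁₂)* V^{A→B}₂₃ V^{C→A}₁₂ (V^{A→B}₂₃)*, the duals V̂^{X→Y} := ΣV^{X→Y*}Σ satisfy the identity (V^{C→B})^∧₁₃ = (V̂^{A→B}₁₂)* V̂^{C→A}₂₃ V̂^{A→B}₁₂ (V̂^{C→A}₂₃)*, i.e. the dual of the composition is the composition of the duals in reversed order. -/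
import Mathlib

theorem stmt7 {G G' : Type*} [Group G] [Group G']
    (VCA12 VAB23 VCB13 : G)
    (hcomp : VAB23 * VCA12 = VCA12 * VCB13 * VAB23)
    (φ : G ≃* G')
    (VhCA23 VhAB12 VhCB13 : G')
    (hCA : φ VCA12 = VhCA23⁻¹) (hAB : φ VAB23 = VhAB12⁻¹)
    (hCB : φ VCB13 = VhCB13⁻¹) :
    VhCB13 = VhAB12⁻¹ * VhCA23 * VhAB12 * VhCA23⁻¹ := by
  have h : VCB13 = VCA12⁻¹ * (VAB23 * VCA12 * VAB23⁻¹) := by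
    rw [hcomp]; group
  have h2 := congrArg φ h
  simp only [map_mul, map_inv, hCA, hAB, hCB] at h2
  rw [inv_eq_iff_eq_inv] at h2
  rw [h2]; group
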